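/- Let Γ be a connected simplicial graph, tree-graded with respect to pieces {Γ_i}_{i∈I}, with a basepoint e. For each vertex x there exist a finite set I_x = {i₀,…,i_k} ⊆ I and vertices x₀,…,x_k = x such that every geodesic g from e to x decomposes as a concatenation g = g₀ \bar{g}₀ g₁ ⋯ \bar{g}_{k-1} g_k where each g_j is a geodesic contained in the piece Γ_{i_j} from the unique vertex e_j of Γ_{i_j} closest to e₀ = e to x_j, and each connecting segment \bar{g}_j has length at most 1. Moreover the sets I_x and {x_j} do not depend on the choice of geodesic g. -/

import Mathlib

/-- A connected simplicial graph `G` is tree-graded with respect to a collection of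
non-empty connected subgraphs (given by their vertex sets `P i`) if every vertex and every
simple loop lies in some piece, no piece contains another, and two distinct pieces share
at most one vertex. -/
def IsTreeGraded {V ι : Type*} (G : SimpleGraph V) (P : ι → Set V) : Prop :=
  (∀ i, (P i).Nonempty) ∧
  (∀ i, (G.induce (P i)).Connected) ∧
  (∀ v : V, ∃ i, v ∈ P i) ∧
  (∀ (v : V) (c : G.Walk v v), c.IsCycle → ∃ i, ∀ u ∈ c.support, u ∈ P i) ∧
  (∀ i j, i ≠ j → ¬ P i ⊆ P j) ∧
  (∀ i j, i ≠ j → (P i ∩ P j).Subsingleton)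

set_option linter.unusedSectionVars false
namespace TGProof

open SimpleGraph Walk

variable {V ι : Type*} [DecidableEq V] {G : SimpleGraph V}

/-- Splitting a geodesic yields geodesics. -/
lemma geo_split (hconn : G.Connected) {e u x : V} {A : G.Walk e u} {B : G.Walk u x}
    (hw : (A.append B).length = G.dist e x) :
    A.length = G.dist e u ∧ B.length = G.dist u x := by
  have h1 := SimpleGraph.dist_le A
  have h2 := SimpleGraph.dist_le B
  have h3 := hconn.dist_triangle (u := e) (v := u) (w := x)
  rw [Walk.length_append] at hw
  omega

lemma geo_take (hconn : G.Connected) {e x : V} {w : G.Walk e x} (hw : w.length = G.dist e x)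
    {v : V} (hv : v ∈ w.support) :
    (w.takeUntil v hv).length = G.dist e v ∧ (w.dropUntil v hv).length = G.dist v x := by
  apply geo_split hconn
  rw [w.take_spec hv]; exact hw

lemma geo_add (hconn : G.Connected) {e x : V} {w : G.Walk e x} (hw : w.length = G.dist e x)
    {v : V} (hv : v ∈ w.support) :
    G.dist e v + G.dist v x = G.dist e x := by
  obtain ⟨h1, h2⟩ := geo_take hconn hw hv
  have := congrArg Walk.length (w.take_spec hv)
  rw [Walk.length_append] at this
  omega

/-- Within the right part of a split geodesic, distances from the source add. -/
lemma geo_drop_dist (hconn : G.Connected) {e u x : V} {A : G.Walk e u} {B : G.Walk u x}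
    (hw : (A.append B).length = G.dist e x) {v : V} (hv : v ∈ B.support) :
    G.dist e v = G.dist e u + G.dist u v := by
  have hB := (geo_split hconn hw).2
  have hA := (geo_split hconn hw).1
  have h1 := (geo_take hconn hB hv).1
  -- walk e → v : A ++ B.takeUntil v
  have key : (A.append (B.takeUntil v hv)).length = G.dist e v := by
    have hassoc : ((A.append (B.takeUntil v hv)).append (B.dropUntil v hv)) = A.append B := by
      rw [← Walk.append_assoc, B.take_spec hv]
    have := geo_split hconn (A := A.append (B.takeUntil v hv)) (B := B.dropUntil v hv)
      (by rw [hassoc]; exact hw)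
    exact this.1
  rw [← key, Walk.length_append, hA, h1]



lemma mem_take_or_drop {e x v u : V} (w : G.Walk e x) (hv : v ∈ w.support)
    (hu : u ∈ w.support) :
    u ∈ (w.takeUntil v hv).support ∨ u ∈ (w.dropUntil v hv).support := by
  have : u ∈ ((w.takeUntil v hv).append (w.dropUntil v hv)).support := by
    rw [w.take_spec hv]; exact hu
  exact (Walk.mem_support_append_iff _ _).1 this

lemma dist_eq_zero (hconn : G.Connected) {u v : V} (h : G.dist u v = 0) : u = v :=
  ((hconn u v).dist_eq_zero_iff).1 h

/-- On a geodesic from `e`, a vertex of the right part has distance at least that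
of the split point, with equality only at the split point. -/
lemma geo_drop_mem (hconn : G.Connected) {e u x : V} {A : G.Walk e u} {B : G.Walk u x}
    (hw : (A.append B).length = G.dist e x) {v : V} (hv : v ∈ B.support) :
    G.dist e u ≤ G.dist e v ∧ (G.dist e v = G.dist e u → v = u) := by
  have h := geo_drop_dist hconn hw hv
  refine ⟨by omega, fun h2 => ?_⟩
  have : G.dist u v = 0 := by omega
  exact (dist_eq_zero hconn this).symm

lemma geo_take_mem (hconn : G.Connected) {e u x : V} {A : G.Walk e u} {B : G.Walk u x}
    (hw : (A.append B).length = G.dist e x) {v : V} (hv : v ∈ A.support) :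
    G.dist e v ≤ G.dist e u ∧ (G.dist e v = G.dist e u → v = u) := by
  have hA := (geo_split hconn hw).1
  -- split A at v
  have h2 := geo_drop_dist hconn (A := A.takeUntil v hv) (B := A.dropUntil v hv)
    (by rw [A.take_spec hv]; exact hA) (A.dropUntil v hv).end_mem_support
  refine ⟨by omega, fun h3 => ?_⟩
  have : G.dist v u = 0 := by omega
  exact dist_eq_zero hconn this

/-- distinct vertices of a geodesic have distinct distances from the source -/
lemma geo_inj (hconn : G.Connected) {e x : V} {w : G.Walk e x} (hw : w.length = G.dist e x)
    {a b : V} (ha : a ∈ w.support) (hb : b ∈ w.support)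
    (hd : G.dist e a = G.dist e b) : a = b := by
  have hsp : (w.takeUntil a ha).append (w.dropUntil a ha) = w := w.take_spec ha
  have hw' : ((w.takeUntil a ha).append (w.dropUntil a ha)).length = G.dist e x := by
    rw [hsp]; exact hw
  rcases mem_take_or_drop w ha hb with h | h
  · exact ((geo_take_mem hconn hw' h).2 hd.symm).symm
  · exact ((geo_drop_mem hconn hw' h).2 hd.symm).symm

/-- membership in the left part from distance bound -/
lemma geo_mem_take (hconn : G.Connected) {e u x : V} {A : G.Walk e u} {B : G.Walk u x}
    (hw : (A.append B).length = G.dist e x) {v : V} (hv : v ∈ (A.append B).support)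
    (hd : G.dist e v ≤ G.dist e u) : v ∈ A.support := by
  rcases (Walk.mem_support_append_iff _ _).1 hv with h | h
  · exact h
  · have h2 := geo_drop_mem hconn hw h
    have : v = u := h2.2 (le_antisymm hd h2.1)
    subst this; exact A.end_mem_support

lemma geo_mem_drop (hconn : G.Connected) {e u x : V} {A : G.Walk e u} {B : G.Walk u x}
    (hw : (A.append B).length = G.dist e x) {v : V} (hv : v ∈ (A.append B).support)
    (hd : G.dist e u ≤ G.dist e v) : v ∈ B.support := by
  rcases (Walk.mem_support_append_iff _ _).1 hv with h | h
  · have h2 := geo_take_mem hconn hw h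
    have : v = u := h2.2 (le_antisymm h2.1 hd)
    subst this; exact B.start_mem_support
  · exact h

/-- first vertex of a walk lying in a set -/
lemma exists_first (S : Set V) {u v : V} (w : G.Walk u v) (hv : v ∈ S) :
    ∃ (a : V) (q : G.Walk u a) (r : G.Walk a v), w = q.append r ∧ a ∈ S ∧
      ∀ c ∈ q.support, c ∈ S → c = a := by
  induction w with
  | nil => exact ⟨_, Walk.nil, Walk.nil, rfl, hv, by intro c hc _; simpa using hc⟩
  | @cons u b x h w ih =>
    by_cases hu : u ∈ S
    · exact ⟨u, Walk.nil, Walk.cons h w, rfl, hu, by simp⟩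
    · obtain ⟨a, q, r, hqr, haS, hq⟩ := ih hv
      refine ⟨a, Walk.cons h q, r, by rw [Walk.cons_append, hqr], haS, ?_⟩
      intro c hc hcS
      rw [Walk.support_cons] at hc
      rcases List.mem_cons.1 hc with rfl | hc
      · exact absurd hcS hu
      · exact hq c hc hcS

lemma isPath_append {a b c : V} {p : G.Walk a b} {q : G.Walk b c}
    (hp : p.IsPath) (hq : q.IsPath) (hint : ∀ v ∈ p.support, v ∈ q.support → v = b) :
    (p.append q).IsPath := by
  apply Walk.IsPath.mk'
  rw [Walk.support_append]
  apply List.Nodup.append hp.support_nodup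
  · have := hq.support_nodup
    rw [q.support_eq_cons] at this
    exact this.of_cons
  · intro v hvp hvq
    have hv : v ∈ q.support := List.mem_of_mem_tail hvq
    have : v = b := hint v hvp hv
    subst this
    have := hq.support_nodup
    rw [q.support_eq_cons] at this
    exact (List.nodup_cons.1 this).1 hvq

/-- a path from `a` to `b` containing the edge `ab` is that edge -/
lemma path_length_one {a b : V} {p : G.Walk a b} (hp : p.IsPath)
    (he : s(a, b) ∈ p.edges) : p.length = 1 := by
  cases p with
  | nil => simp at he
  | cons h p' =>
    rw [Walk.edges_cons, List.mem_cons] at he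
    rcases he with h1 | h1
    · rcases Sym2.eq_iff.1 h1 with ⟨-, h2⟩ | ⟨h2, h3⟩
      · subst h2
        have : p' = Walk.nil := Walk.isPath_iff_eq_nil.1 hp.of_cons
        simp [this]
      · exact absurd h2 h.ne
    · exfalso
      have ha : a ∈ p'.support := p'.fst_mem_support_of_mem_edges h1
      exact ((Walk.cons_isPath_iff _ _).1 hp).2 ha

/-- two internally disjoint paths with the same distinct endpoints and total length
at least 3 form a cycle -/
lemma cycle_two_paths {a b : V} (hab : a ≠ b) {p q : G.Walk a b}
    (hp : p.IsPath) (hq : q.IsPath)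
    (hint : ∀ v ∈ p.support, v ∈ q.support → v = a ∨ v = b)
    (hlen : 3 ≤ p.length + q.length) :
    (p.append q.reverse).IsCycle := by
  have hedge : ∀ ed, ed ∈ p.edges → ed ∈ q.edges → False := by
    intro ed hep heq
    induction ed with
    | h s t =>
      have hs : s ∈ p.support := p.fst_mem_support_of_mem_edges hep
      have ht : t ∈ p.support := p.snd_mem_support_of_mem_edges hep
      have hs' : s ∈ q.support := q.fst_mem_support_of_mem_edges heq
      have ht' : t ∈ q.support := q.snd_mem_support_of_mem_edges heq
      have hst : s ≠ t := (p.adj_of_mem_edges hep).ne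
      have hab' : s(s, t) = s(a, b) := by
        rcases hint s hs hs' with rfl | rfl <;> rcases hint t ht ht' with rfl | rfl
        · exact absurd rfl hst
        · rfl
        · rw [Sym2.eq_swap]
        · exact absurd rfl hst
      rw [hab'] at hep heq
      have := path_length_one hp hep
      have := path_length_one hq heq
      omega
  constructor
  · constructor
    · constructor
      rw [Walk.edges_append, Walk.edges_reverse]
      apply List.Nodup.append hp.isTrail.edges_nodup
        (List.nodup_reverse.2 hq.isTrail.edges_nodup)
      intro ed hed hed'
      exact hedge ed hed (List.mem_reverse.1 hed')
    · intro hnil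
      have := congrArg Walk.length hnil
      rw [Walk.length_append, Walk.length_reverse] at this
      simp only [Walk.length_nil] at this
      omega
  · rw [Walk.tail_support_append]
    apply List.Nodup.append
    · have := hp.support_nodup
      rw [p.support_eq_cons] at this
      exact this.of_cons
    · have := hq.reverse.support_nodup
      rw [q.reverse.support_eq_cons] at this
      exact this.of_cons
    · intro v hv1 hv2
      have hvp : v ∈ p.support := List.mem_of_mem_tail hv1
      have hvq : v ∈ q.support := by
        have := List.mem_of_mem_tail hv2
        rw [Walk.support_reverse, List.mem_reverse] at this
        exact this
      rcases hint v hvp hvq with rfl | rfl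
      · have := hp.support_nodup
        rw [p.support_eq_cons] at this
        exact (List.nodup_cons.1 this).1 hv1
      · have := hq.reverse.support_nodup
        rw [q.reverse.support_eq_cons] at this
        exact (List.nodup_cons.1 this).1 hv2

variable {P : ι → Set V}

lemma induce_walk_out {s : Set V} {A B : s} (W : (G.induce s).Walk A B) :
    ∃ p : G.Walk A.1 B.1, ∀ c ∈ p.support, c ∈ s := by
  induction W with
  | nil => exact ⟨Walk.nil, by intro c hc; simp at hc; subst hc; exact Subtype.coe_prop _⟩
  | @cons A C B h W ih =>
    obtain ⟨p, hp⟩ := ih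
    refine ⟨Walk.cons h p, ?_⟩
    intro c hc
    change c ∈ A.1 :: p.support at hc
    rcases List.mem_cons.1 hc with rfl | hc
    · exact Subtype.coe_prop _
    · exact hp c hc

lemma piece_walk (hpc : ∀ i, (G.induce (P i)).Connected) (i : ι) {u v : V}
    (hu : u ∈ P i) (hv : v ∈ P i) :
    ∃ p : G.Walk u v, p.IsPath ∧ ∀ c ∈ p.support, c ∈ P i := by
  obtain ⟨W⟩ := (hpc i).preconnected ⟨u, hu⟩ ⟨v, hv⟩
  obtain ⟨p, hp⟩ := induce_walk_out W
  exact ⟨p.toPath, p.toPath.isPath, fun c hc => hp c (p.support_toPath_subset hc)⟩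

lemma pieces_eq_of_two (hss : ∀ i j, i ≠ j → (P i ∩ P j).Subsingleton)
    {i j : ι} {a b : V} (hai : a ∈ P i) (haj : a ∈ P j) (hbi : b ∈ P i) (hbj : b ∈ P j)
    (hab : a ≠ b) : i = j := by
  by_contra hne
  exact hab (hss i j hne ⟨hai, haj⟩ ⟨hbi, hbj⟩)

lemma mem_or_mem_or_two_le {u v c : V} (w : G.Walk u v) (hc : c ∈ w.support) :
    c = u ∨ c = v ∨ 2 ≤ w.length := by
  cases w with
  | nil => simp at hc; tauto
  | @cons _ b _ h p =>
    rw [Walk.support_cons] at hc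
    rcases List.mem_cons.1 hc with rfl | hc
    · tauto
    · cases p with
      | nil => simp at hc; tauto
      | cons h' p' => right; right; simp [Walk.length_cons]

lemma piece_convex (hconn : G.Connected)
    (hpc : ∀ i, (G.induce (P i)).Connected)
    (hcyc : ∀ (v : V) (c : G.Walk v v), c.IsCycle → ∃ i, ∀ u ∈ c.support, u ∈ P i)
    (hss : ∀ i j, i ≠ j → (P i ∩ P j).Subsingleton)
    (i : ι) :
    ∀ (n : ℕ) {u v : V}, u ∈ P i → v ∈ P i → ∀ (w : G.Walk u v), w.length ≤ n →
      w.length = G.dist u v → ∀ c ∈ w.support, c ∈ P i := by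
  intro n
  induction n with
  | zero =>
    intro u v hu hv w hn hw c hc
    have h0 : w.length = 0 := Nat.le_zero.1 hn
    have := Walk.eq_of_length_eq_zero h0
    subst this
    rcases mem_or_mem_or_two_le w hc with rfl | rfl | h2
    · exact hu
    · exact hu
    · omega
  | succ n ih =>
    intro u v hu hv w hn hw c hc
    by_cases hmid : ∃ m, m ∈ w.support ∧ m ≠ u ∧ m ≠ v ∧ m ∈ P i
    · obtain ⟨m, hm, hmu, hmv, hmP⟩ := hmid
      have hsp := w.take_spec hm
      have hw' : ((w.takeUntil m hm).append (w.dropUntil m hm)).length = G.dist u v := by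
        rw [hsp]; exact hw
      have hlen : (w.takeUntil m hm).length + (w.dropUntil m hm).length = w.length := by
        have := congrArg Walk.length hsp
        rw [Walk.length_append] at this
        omega
      have h1 : 1 ≤ (w.takeUntil m hm).length := by
        by_contra h
        exact hmu (Walk.eq_of_length_eq_zero (p := w.takeUntil m hm) (by omega)).symm
      have h2 : 1 ≤ (w.dropUntil m hm).length := by
        by_contra h
        exact hmv (Walk.eq_of_length_eq_zero (p := w.dropUntil m hm) (by omega))
      obtain ⟨hA, hB⟩ := geo_split hconn hw'
      rcases mem_take_or_drop w hm hc with h | h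
      · exact ih hu hmP (w.takeUntil m hm) (by omega) hA c h
      · exact ih hmP hv (w.dropUntil m hm) (by omega) hB c h
    · by_cases hcu : c = u
      · subst hcu; exact hu
      by_cases hcv : c = v
      · subst hcv; exact hv
      -- interior vertex not (known to be) in the piece : use a cycle
      have h2 : 2 ≤ w.length := by
        rcases mem_or_mem_or_two_le w hc with rfl | rfl | h2 <;> tauto
      have huv : u ≠ v := by
        intro h; subst h
        have : G.dist u u = 0 := by simp
        omega
      obtain ⟨pp, hppP, hppS⟩ := piece_walk hpc i hu hv
      have hwpath : w.IsPath := w.isPath_of_length_eq_dist hw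
      have hpl : 1 ≤ pp.length := by
        by_contra h
        exact huv (Walk.eq_of_length_eq_zero (p := pp) (by omega))
      have hcyc' := cycle_two_paths (p := w) (q := pp) huv hwpath hppP
        (fun x hx hx' => by
          by_cases h1 : x = u
          · exact Or.inl h1
          by_cases h2 : x = v
          · exact Or.inr h2
          · exact absurd ⟨x, hx, h1, h2, hppS x hx'⟩ hmid)
        (by omega)
      obtain ⟨m, hm⟩ := hcyc u _ hcyc'
      have hum : u ∈ P m := hm u (w.append pp.reverse).start_mem_support
      have hvm : v ∈ P m := hm v (by
        apply Walk.subset_support_append_left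
        exact w.end_mem_support)
      have hcm : c ∈ P m := hm c (Walk.subset_support_append_left _ _ hc)
      have : m = i := pieces_eq_of_two hss hum hu hvm hv huv
      rwa [this] at hcm

/-- Gate property: every geodesic from the basepoint to a vertex of a piece passes
through the entry point of the piece, meeting the piece only at the entry before it,
and staying in the piece afterwards. -/
lemma gate (hconn : G.Connected)
    (hpc : ∀ i, (G.induce (P i)).Connected)
    (hcyc : ∀ (v : V) (c : G.Walk v v), c.IsCycle → ∃ i, ∀ u ∈ c.support, u ∈ P i)
    (hss : ∀ i j, i ≠ j → (P i ∩ P j).Subsingleton)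
    {e : V} {entry : ι → V}
    (hentry_mem : ∀ i, entry i ∈ P i)
    (hentry_min : ∀ i, ∀ v ∈ P i, G.dist e (entry i) ≤ G.dist e v)
    (hentry_uniq : ∀ i, ∀ v ∈ P i, G.dist e v = G.dist e (entry i) → v = entry i)
    {i : ι} {x : V} (hx : x ∈ P i) {w : G.Walk e x} (hw : w.length = G.dist e x) :
    ∃ (q : G.Walk e (entry i)) (r : G.Walk (entry i) x),
      w = q.append r ∧ (∀ c ∈ q.support, c ∈ P i → c = entry i) ∧
      (∀ c ∈ r.support, c ∈ P i) := by
  obtain ⟨a, q, r, hsp, haP, hqP⟩ := exists_first (P i) w hx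
  have hw' : (q.append r).length = G.dist e x := by rw [← hsp]; exact hw
  obtain ⟨hqg, hrg⟩ := geo_split hconn hw'
  have haE : a = entry i := by
    by_contra hne
    -- a geodesic from e to the entry point
    obtain ⟨h0, hh0⟩ := (hconn e (entry i)).exists_walk_length_eq_dist
    obtain ⟨b, q2, r2, hsp2, hbP, hq2P⟩ := exists_first (P i) h0 (hentry_mem i)
    have hh0' : (q2.append r2).length = G.dist e (entry i) := by rw [← hsp2]; exact hh0
    obtain ⟨hq2g, hr2g⟩ := geo_split hconn hh0'
    have hbe : b = entry i := by
      apply hentry_uniq i b hbP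
      have h1 := hentry_min i b hbP
      have hlen2 := hh0'
      rw [Walk.length_append] at hlen2
      omega
    subst hbe
    -- last vertex of q lying on q2
    have heS : e ∈ {v | v ∈ q2.support} := q2.start_mem_support
    obtain ⟨cc, α, β, hspl, hccS, hα⟩ := exists_first {v | v ∈ q2.support} q.reverse heS
    have hccq2 : cc ∈ q2.support := hccS
    have hccq : cc ∈ q.support := by
      have : cc ∈ q.reverse.support := by
        rw [hspl]
        exact Walk.subset_support_append_left _ _ α.end_mem_support
      rwa [Walk.support_reverse, List.mem_reverse] at this
    have hccP : cc ∉ P i := by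
      intro hcP
      exact hne ((hqP cc hccq hcP) ▸ (hq2P cc hccq2 hcP))
    have hcca : cc ≠ a := fun h => hccP (h ▸ haP)
    have hcce : cc ≠ entry i := fun h => hccP (h ▸ hentry_mem i)
    obtain ⟨pp, hppP, hppS⟩ := piece_walk hpc i haP (hentry_mem i)
    have hwpath : w.IsPath := w.isPath_of_length_eq_dist hw
    have hqrpath : (q.append r).IsPath := by rw [← hsp]; exact hwpath
    have hqpath : q.IsPath := hqrpath.of_append_left
    have hαpath : α.IsPath := by
      have : (α.append β).IsPath := by rw [← hspl]; exact hqpath.reverse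
      exact this.of_append_left
    have hDpath : α.reverse.IsPath := hαpath.reverse
    have hDsub : ∀ v ∈ α.reverse.support, v ∈ q.support := by
      intro v hv
      rw [Walk.support_reverse, List.mem_reverse] at hv
      have : v ∈ q.reverse.support := by
        rw [hspl]
        exact Walk.subset_support_append_left _ _ hv
      rwa [Walk.support_reverse, List.mem_reverse] at this
    have hpath1 : (α.reverse.append pp).IsPath := by
      apply isPath_append hDpath hppP
      intro v hv hv'
      exact hqP v (hDsub v hv) (hppS v hv')
    have hq2path : q2.IsPath := by
      apply Walk.isPath_of_length_eq_dist
      omega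
    have hpath2 : (q2.dropUntil cc hccq2).IsPath := hq2path.dropUntil hccq2
    have hαlen : 1 ≤ α.length := by
      by_contra h
      exact hcca (Walk.eq_of_length_eq_zero (p := α) (by omega)).symm
    have hpplen : 1 ≤ pp.length := by
      by_contra h
      exact hne (Walk.eq_of_length_eq_zero (p := pp) (by omega))
    have hp2len : 1 ≤ (q2.dropUntil cc hccq2).length := by
      by_contra h
      exact hcce (Walk.eq_of_length_eq_zero (p := q2.dropUntil cc hccq2) (by omega))
    have hcycle := cycle_two_paths (p := α.reverse.append pp) (q := q2.dropUntil cc hccq2)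
      hcce hpath1 hpath2
      (by
        intro v hv hv'
        have hvq2 : v ∈ q2.support := q2.support_dropUntil_subset hccq2 hv'
        rcases (Walk.mem_support_append_iff _ _).1 hv with h | h
        · left
          exact hα v (by rwa [Walk.support_reverse, List.mem_reverse] at h) hvq2
        · right
          exact hq2P v hvq2 (hppS v h))
      (by rw [Walk.length_append, Walk.length_reverse]; omega)
    obtain ⟨m, hm⟩ := hcyc cc _ hcycle
    have ham : a ∈ P m := hm a (by
      apply Walk.subset_support_append_left
      exact Walk.subset_support_append_left _ _ α.reverse.end_mem_support)
    have hem : entry i ∈ P m := hm (entry i) (by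
      apply Walk.subset_support_append_left
      exact (α.reverse.append pp).end_mem_support)
    have hccm : cc ∈ P m := hm cc (Walk.subset_support_append_left _ _ (α.reverse.append pp).start_mem_support)
    have : m = i := pieces_eq_of_two hss ham haP hem (hentry_mem i) hne
    exact hccP (this ▸ hccm)
  subst haE
  exact ⟨q, r, hsp, hqP, fun c hc =>
    piece_convex hconn hpc hcyc hss i r.length (hentry_mem i) hx r le_rfl hrg c hc⟩

lemma isPath_concat {a b c : V} {p : G.Walk a b} (hp : p.IsPath) (h : G.Adj b c)
    (hc : c ∉ p.support) : (p.concat h).IsPath := by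
  rw [Walk.concat_eq_append]
  apply isPath_append hp ((Walk.cons_isPath_iff h Walk.nil).2 ⟨Walk.IsPath.nil, by simp [h.ne]⟩)
  intro v hv hv'
  simp only [Walk.support_cons, Walk.support_nil, List.mem_cons, List.mem_singleton,
    or_false] at hv'
  rcases hv' with rfl | hv'
  · rfl
  · simp only [List.not_mem_nil, or_false] at hv'
    subst hv'
    exact absurd hv hc

lemma dist_adj_le {a b : V} (h : G.Adj a b) : G.dist a b ≤ 1 := by
  have := SimpleGraph.dist_le (Walk.cons h Walk.nil)
  simpa using this

/-- the vertex before `y` on a geodesic is unique, provided every piece containing `y`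
has entry point `y`. -/
lemma pred_unique (hconn : G.Connected)
    (hcyc : ∀ (v : V) (c : G.Walk v v), c.IsCycle → ∃ i, ∀ u ∈ c.support, u ∈ P i)
    {e : V} {entry : ι → V}
    (hentry_min : ∀ i, ∀ v ∈ P i, G.dist e (entry i) ≤ G.dist e v)
    {y : V} (hall : ∀ p, y ∈ P p → entry p = y)
    {z z' : V} {A : G.Walk e z} {A' : G.Walk e z'} (hzy : G.Adj z y) (hzy' : G.Adj z' y)
    (hgeo : (A.concat hzy).length = G.dist e y)
    (hgeo' : (A'.concat hzy').length = G.dist e y) : z = z' := by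
  by_contra hzz
  have hAl : A.length + 1 = G.dist e y := by
    rw [← hgeo, Walk.length_concat]
  have hAl' : A'.length + 1 = G.dist e y := by
    rw [← hgeo', Walk.length_concat]
  have hdz : G.dist e z = A.length := by
    have h1 := SimpleGraph.dist_le A
    have h2 := hconn.dist_triangle (u := e) (v := z) (w := y)
    have h3 := dist_adj_le hzy
    omega
  have hdz' : G.dist e z' = A'.length := by
    have h1 := SimpleGraph.dist_le A'
    have h2 := hconn.dist_triangle (u := e) (v := z') (w := y)
    have h3 := dist_adj_le hzy'
    omega
  have hwp : (A.concat hzy).IsPath := (A.concat hzy).isPath_of_length_eq_dist hgeo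
  have hwp' : (A'.concat hzy').IsPath := (A'.concat hzy').isPath_of_length_eq_dist hgeo'
  have hyA : y ∉ A.support := by
    intro hy
    have := hwp.support_nodup
    rw [Walk.support_concat] at this
    exact (List.disjoint_of_nodup_append this) hy (by simp)
  have hyA' : y ∉ A'.support := by
    intro hy
    have := hwp'.support_nodup
    rw [Walk.support_concat] at this
    exact (List.disjoint_of_nodup_append this) hy (by simp)
  have hApath : A.IsPath := by
    rw [Walk.concat_eq_append] at hwp
    exact hwp.of_append_left
  have hApath' : A'.IsPath := by
    rw [Walk.concat_eq_append] at hwp'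
    exact hwp'.of_append_left
  -- last common vertex of A and A'
  have heS : e ∈ {v | v ∈ A'.support} := by exact A'.start_mem_support
  obtain ⟨cc, α, β, hspl, hccS, hα⟩ := exists_first {v | v ∈ A'.support} A.reverse heS
  have hccA' : cc ∈ A'.support := hccS
  have hDsub : ∀ v ∈ α.reverse.support, v ∈ A.support := by
    intro v hv
    rw [Walk.support_reverse, List.mem_reverse] at hv
    have : v ∈ A.reverse.support := by
      rw [hspl]; exact Walk.subset_support_append_left _ _ hv
    rwa [Walk.support_reverse, List.mem_reverse] at this
  have hαpath : α.IsPath := by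
    have : (α.append β).IsPath := by rw [← hspl]; exact hApath.reverse
    exact this.of_append_left
  have hyD : y ∉ α.reverse.support := fun hy => hyA (hDsub y hy)
  have hpath1 : (α.reverse.concat hzy).IsPath := isPath_concat hαpath.reverse hzy hyD
  have hdroppath : (A'.dropUntil cc hccA').IsPath := hApath'.dropUntil hccA'
  have hydrop : y ∉ (A'.dropUntil cc hccA').support :=
    fun hy => hyA' (A'.support_dropUntil_subset hccA' hy)
  have hpath2 : ((A'.dropUntil cc hccA').concat hzy').IsPath :=
    isPath_concat hdroppath hzy' hydrop
  have hccy : cc ≠ y := by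
    intro h
    subst h
    exact hyA (hDsub cc α.reverse.start_mem_support)
  have hlen3 : 3 ≤ (α.reverse.concat hzy).length + ((A'.dropUntil cc hccA').concat hzy').length := by
    rw [Walk.length_concat, Walk.length_concat, Walk.length_reverse]
    by_cases h1 : α.length = 0
    · have : z = cc := Walk.eq_of_length_eq_zero (p := α) h1
      subst this
      have h2 : (A'.dropUntil z hccA').length ≠ 0 := by
        intro h0
        exact hzz (Walk.eq_of_length_eq_zero (p := A'.dropUntil z hccA') h0)
      omega
    · omega
  have hcycle := cycle_two_paths (p := α.reverse.concat hzy)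
      (q := (A'.dropUntil cc hccA').concat hzy') hccy hpath1 hpath2
    (by
      intro v hv hv'
      rw [Walk.support_concat, List.mem_append] at hv hv'
      rcases hv with hv | hv
      · rcases hv' with hv' | hv'
        · left
          exact hα v (by rwa [Walk.support_reverse, List.mem_reverse] at hv)
            (A'.support_dropUntil_subset hccA' hv')
        · right; simpa using hv'
      · right; simpa using hv)
    hlen3
  obtain ⟨m, hm⟩ := hcyc cc _ hcycle
  have hym : y ∈ P m := hm y (by
    apply Walk.subset_support_append_left
    exact (α.reverse.concat hzy).end_mem_support)
  have hzm : z ∈ P m := hm z (by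
    apply Walk.subset_support_append_left
    rw [Walk.support_concat, List.mem_append]
    left
    exact α.reverse.end_mem_support)
  have hentm : entry m = y := hall m hym
  have := hentry_min m z hzm
  rw [hentm] at this
  omega

lemma exists_concat {u v : V} (w : G.Walk u v) (huv : u ≠ v) :
    ∃ (z : V) (A : G.Walk u z) (h : G.Adj z v), w = A.concat h := by
  cases w with
  | nil => exact absurd rfl huv
  | cons h p =>
    obtain ⟨z, A, h', heq⟩ := Walk.exists_cons_eq_concat h p
    exact ⟨z, A, h', heq⟩

lemma inj_snoc {α : Type*} {n : ℕ} {f : Fin (n + 1) → α} {a : α}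
    (hf : Function.Injective f) (ha : ∀ j, f j ≠ a) :
    Function.Injective (Fin.snoc f a : Fin (n + 2) → α) := by
  intro j j' h
  rcases Fin.eq_castSucc_or_eq_last j with ⟨j1, rfl⟩ | rfl <;>
    rcases Fin.eq_castSucc_or_eq_last j' with ⟨j2, rfl⟩ | rfl
  · rw [Fin.snoc_castSucc, Fin.snoc_castSucc] at h
    rw [hf h]
  · rw [Fin.snoc_castSucc, Fin.snoc_last] at h
    exact absurd h (ha j1)
  · rw [Fin.snoc_castSucc, Fin.snoc_last] at h
    exact absurd h.symm (ha j2)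
  · rfl

/-- The invariant package produced by the decomposition. -/
def Pkg (G : SimpleGraph V) (P : ι → Set V) (e : V) (entry : ι → V) (x : V) : Prop :=
  ∃ (k : ℕ) (idx : Fin (k + 1) → ι) (pts : Fin (k + 1) → V),
    Function.Injective idx ∧
    entry (idx 0) = e ∧
    pts (Fin.last k) = x ∧
    (∀ j, pts j ∈ P (idx j)) ∧
    (∀ w : G.Walk e x, w.length = G.dist e x →
      (∀ j, entry (idx j) ∈ w.support ∧ pts j ∈ w.support) ∧
      (∀ j, ∀ v ∈ w.support, G.dist e (entry (idx j)) ≤ G.dist e v →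
        G.dist e v ≤ G.dist e (pts j) → v ∈ P (idx j))) ∧
    (∀ j : Fin k, G.dist (pts j.castSucc) (entry (idx j.succ)) ≤ 1) ∧
    (G.dist e x = (∑ j, G.dist (entry (idx j)) (pts j)) +
      ∑ j : Fin k, G.dist (pts j.castSucc) (entry (idx j.succ))) ∧
    (∀ j, j ≠ Fin.last k → G.dist e (entry (idx j)) < G.dist e x) ∧
    ((∃ p, x ∈ P p ∧ entry p ≠ x) → entry (idx (Fin.last k)) ≠ x)

lemma extend (hconn : G.Connected)
    (hpc : ∀ i, (G.induce (P i)).Connected)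
    (hcyc : ∀ (v : V) (c : G.Walk v v), c.IsCycle → ∃ i, ∀ u ∈ c.support, u ∈ P i)
    (hss : ∀ i j, i ≠ j → (P i ∩ P j).Subsingleton)
    {e : V} {entry : ι → V}
    (hentry_mem : ∀ i, entry i ∈ P i)
    (hentry_min : ∀ i, ∀ v ∈ P i, G.dist e (entry i) ≤ G.dist e v)
    (hentry_uniq : ∀ i, ∀ v ∈ P i, G.dist e v = G.dist e (entry i) → v = entry i)
    {x : V} {i : ι} (hxi : x ∈ P i) {t : V}
    (ht_lt : G.dist e t < G.dist e x)
    (ht : ∀ (w : G.Walk e x), w.length = G.dist e x → t ∈ w.support)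
    (hty : G.dist t (entry i) ≤ 1)
    (hsum2 : G.dist e (entry i) = G.dist e t + G.dist t (entry i))
    (hsep : (t = entry i ∧ ∃ p, t ∈ P p ∧ entry p ≠ t) ∨ G.dist e t < G.dist e (entry i))
    (hd_new : (∃ p, x ∈ P p ∧ entry p ≠ x) → entry i ≠ x)
    (hpkg : Pkg G P e entry t) :
    Pkg G P e entry x := by
  obtain ⟨k, idx, pts, hinj, h0, hlast, hmemP, hgeo, hcon, hsum, hc, hd⟩ := hpkg
  obtain ⟨w0t, hw0t⟩ := (hconn e t).exists_walk_length_eq_dist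
  have hb : ∀ j, G.dist e (entry (idx j)) ≤ G.dist e t := by
    intro j
    have hmem := ((hgeo w0t hw0t).1 j).1
    have := geo_add hconn hw0t hmem
    omega
  have hbp : ∀ j, G.dist e (pts j) ≤ G.dist e t := by
    intro j
    have hmem := ((hgeo w0t hw0t).1 j).2
    have := geo_add hconn hw0t hmem
    omega
  have hinot : ∀ j, idx j ≠ i := by
    intro j hji
    rcases hsep with ⟨hti, hex⟩ | hlt
    · by_cases hjl : j = Fin.last k
      · have := hd hex
        rw [hjl] at hji
        rw [hji] at this
        exact this hti.symm
      · have h1 := hc j hjl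
        rw [hji, ← hti] at h1
        exact lt_irrefl _ h1
    · have h1 := hb j
      rw [hji] at h1
      omega
  have hyx_dist : G.dist e x = G.dist e (entry i) + G.dist (entry i) x := by
    obtain ⟨w0, hw0⟩ := (hconn e x).exists_walk_length_eq_dist
    obtain ⟨q, r, hsp, _, _⟩ := gate hconn hpc hcyc hss hentry_mem hentry_min hentry_uniq hxi hw0
    have hw0' : (q.append r).length = G.dist e x := by rw [← hsp]; exact hw0
    obtain ⟨hq, hr⟩ := geo_split hconn hw0'
    rw [Walk.length_append] at hw0'
    omega
  refine ⟨k + 1, Fin.snoc idx i, Fin.snoc pts x, inj_snoc hinj hinot, ?_, ?_, ?_, ?_, ?_, ?_, ?_, ?_⟩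
  · rw [show (0 : Fin (k + 2)) = Fin.castSucc 0 from (Fin.castSucc_zero).symm,
      Fin.snoc_castSucc]
    exact h0
  · rw [Fin.snoc_last]
  · intro j
    rcases Fin.eq_castSucc_or_eq_last j with ⟨j', rfl⟩ | rfl
    · rw [Fin.snoc_castSucc, Fin.snoc_castSucc]
      exact hmemP j'
    · rw [Fin.snoc_last, Fin.snoc_last]
      exact hxi
  · intro w hw
    obtain ⟨q, r, hsp, hqP, hrP⟩ :=
      gate hconn hpc hcyc hss hentry_mem hentry_min hentry_uniq hxi hw
    have hw' : (q.append r).length = G.dist e x := by rw [← hsp]; exact hw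
    obtain ⟨hqg, hrg⟩ := geo_split hconn hw'
    have htw : t ∈ w.support := ht w hw
    have hwsplit : ((w.takeUntil t htw).append (w.dropUntil t htw)).length = G.dist e x := by
      rw [w.take_spec htw]; exact hw
    have hAg : (w.takeUntil t htw).length = G.dist e t := (geo_split hconn hwsplit).1
    have old := hgeo (w.takeUntil t htw) hAg
    constructor
    · intro j
      rcases Fin.eq_castSucc_or_eq_last j with ⟨j', rfl⟩ | rfl
      · rw [Fin.snoc_castSucc, Fin.snoc_castSucc]
        exact ⟨w.support_takeUntil_subset htw ((old.1 j').1),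
          w.support_takeUntil_subset htw ((old.1 j').2)⟩
      · rw [Fin.snoc_last, Fin.snoc_last]
        constructor
        · rw [hsp]
          exact (Walk.mem_support_append_iff _ _).2 (Or.inl q.end_mem_support)
        · exact w.end_mem_support
    · intro j v hv hv1 hv2
      rcases Fin.eq_castSucc_or_eq_last j with ⟨j', rfl⟩ | rfl
      · rw [Fin.snoc_castSucc] at hv1 hv2 ⊢
        have h2 : G.dist e v ≤ G.dist e t := le_trans hv2 (hbp j')
        have hvA : v ∈ (w.takeUntil t htw).support := by
          apply geo_mem_take hconn hwsplit _ h2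
          rw [w.take_spec htw]
          exact hv
        exact old.2 j' v hvA hv1 hv2
      · rw [Fin.snoc_last] at hv1 ⊢
        have hvr : v ∈ r.support := by
          apply geo_mem_drop hconn hw' _ hv1
          rw [← hsp]
          exact hv
        exact hrP v hvr
  · intro j
    rcases Fin.eq_castSucc_or_eq_last j with ⟨j', rfl⟩ | rfl
    · rw [Fin.succ_castSucc, Fin.snoc_castSucc, Fin.snoc_castSucc]
      exact hcon j'
    · rw [Fin.succ_last, Fin.snoc_last, Fin.snoc_castSucc, hlast]
      exact hty
  · have e1 : (∑ j : Fin (k + 2), G.dist (entry ((Fin.snoc idx i : Fin (k + 2) → ι) j)) ((Fin.snoc pts x : Fin (k + 2) → V) j)) =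
        (∑ j : Fin (k + 1), G.dist (entry (idx j)) (pts j)) + G.dist (entry i) x := by
      rw [Fin.sum_univ_castSucc]
      simp only [Fin.snoc_castSucc, Fin.snoc_last]
    have e2 : (∑ j : Fin (k + 1), G.dist ((Fin.snoc pts x : Fin (k + 2) → V) j.castSucc)
          (entry ((Fin.snoc idx i : Fin (k + 2) → ι) j.succ))) =
        (∑ j : Fin k, G.dist (pts j.castSucc) (entry (idx j.succ))) + G.dist t (entry i) := by
      rw [Fin.sum_univ_castSucc]
      simp only [Fin.succ_castSucc, Fin.snoc_castSucc, Fin.succ_last, Fin.snoc_last, hlast]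
    rw [e1, e2]
    omega
  · intro j hj
    rcases Fin.eq_castSucc_or_eq_last j with ⟨j', rfl⟩ | rfl
    · rw [Fin.snoc_castSucc]
      exact lt_of_le_of_lt (hb j') ht_lt
    · exact absurd rfl hj
  · intro hex
    rw [Fin.snoc_last]
    exact hd_new hex

lemma decomp (hconn : G.Connected)
    (hpc : ∀ i, (G.induce (P i)).Connected)
    (hcov : ∀ v : V, ∃ i, v ∈ P i)
    (hcyc : ∀ (v : V) (c : G.Walk v v), c.IsCycle → ∃ i, ∀ u ∈ c.support, u ∈ P i)
    (hss : ∀ i j, i ≠ j → (P i ∩ P j).Subsingleton)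
    {e : V} {entry : ι → V}
    (hentry_mem : ∀ i, entry i ∈ P i)
    (hentry_min : ∀ i, ∀ v ∈ P i, G.dist e (entry i) ≤ G.dist e v)
    (hentry_uniq : ∀ i, ∀ v ∈ P i, G.dist e v = G.dist e (entry i) → v = entry i) :
    ∀ (n : ℕ) (x : V), G.dist e x = n → Pkg G P e entry x := by
  intro n
  induction n using Nat.strong_induction_on with
  | _ n ih =>
  intro x hxn
  have hchoice : ∃ i, x ∈ P i ∧ ((∃ p, x ∈ P p ∧ entry p ≠ x) → entry i ≠ x) := by
    by_cases hex : ∃ p, x ∈ P p ∧ entry p ≠ x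
    · obtain ⟨p, h1, h2⟩ := hex
      exact ⟨p, h1, fun _ => h2⟩
    · obtain ⟨p, h1⟩ := hcov x
      exact ⟨p, h1, fun h => absurd h hex⟩
  obtain ⟨i, hxi, hmaximal⟩ := hchoice
  have hyP : entry i ∈ P i := hentry_mem i
  by_cases hye : entry i = e
  · refine ⟨0, fun _ => i, fun _ => x, (fun a b _ => Fin.ext (by omega)), hye, rfl,
      fun _ => hxi, ?_, ?_, ?_, ?_, ?_⟩
    · intro w hw
      have hsupp : ∀ v ∈ w.support, v ∈ P i :=
        piece_convex hconn hpc hcyc hss i w.length (hye ▸ hyP) hxi w le_rfl hw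
      constructor
      · intro j
        refine ⟨?_, w.end_mem_support⟩
        rw [hye]
        exact w.start_mem_support
      · intro j v hv _ _
        exact hsupp v hv
    · exact fun j => j.elim0
    · simp [hye]
    · intro j hj
      exact absurd (Fin.ext (by omega) : j = Fin.last 0) hj
    · intro hex
      exact hmaximal hex
  · by_cases hQ : ∃ q, entry i ∈ P q ∧ entry q ≠ entry i
    · -- the entry point of the current piece lies in another piece
      have hyx : entry i ≠ x := by
        intro h
        exact (hmaximal (by rw [h] at hQ; exact hQ)) h
      have hdy_le : G.dist e (entry i) ≤ G.dist e x := hentry_min i x hxi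
      have hdy_lt : G.dist e (entry i) < G.dist e x := by
        rcases lt_or_eq_of_le hdy_le with h | h
        · exact h
        · exact absurd (hentry_uniq i x hxi h.symm) (fun hh => hyx hh.symm)
      apply extend hconn hpc hcyc hss hentry_mem hentry_min hentry_uniq hxi
        (t := entry i) hdy_lt ?_ (by simp [SimpleGraph.dist_self]) (by simp [SimpleGraph.dist_self]) (Or.inl ⟨rfl, hQ⟩)
        (fun _ => hyx) (ih (G.dist e (entry i)) (by omega) (entry i) rfl)
      intro w hw
      obtain ⟨q, r, hsp, _, _⟩ :=
        gate hconn hpc hcyc hss hentry_mem hentry_min hentry_uniq hxi hw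
      rw [hsp]
      exact (Walk.mem_support_append_iff _ _).2 (Or.inl q.end_mem_support)
    · push_neg at hQ
      have hene : e ≠ entry i := fun h => hye h.symm
      have hd1 : 1 ≤ G.dist e (entry i) := hconn.pos_dist_of_ne hene
      obtain ⟨w0y, hw0y⟩ := (hconn e (entry i)).exists_walk_length_eq_dist
      obtain ⟨z, A, hzy, hAeq⟩ := exists_concat w0y hene
      have hgeo0 : (A.concat hzy).length = G.dist e (entry i) := by
        rw [← hAeq]; exact hw0y
      have hdz : G.dist e z = A.length := by
        have h1 := SimpleGraph.dist_le A
        have h2 := hconn.dist_triangle (u := e) (v := z) (w := entry i)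
        have h3 := dist_adj_le hzy
        rw [Walk.length_concat] at hgeo0
        omega
      have hdz' : G.dist e z + 1 = G.dist e (entry i) := by
        rw [Walk.length_concat] at hgeo0
        omega
      have hdzy : G.dist z (entry i) = 1 := by
        have h1 := dist_adj_le hzy
        have h2 : z ≠ entry i := by
          intro h
          rw [h] at hdz'
          omega
        have h3 := hconn.pos_dist_of_ne h2
        omega
      have hdy_le : G.dist e (entry i) ≤ G.dist e x := hentry_min i x hxi
      apply extend hconn hpc hcyc hss hentry_mem hentry_min hentry_uniq hxi
        (t := z) (by omega) ?_ (by omega) (by omega) (Or.inr (by omega))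
        hmaximal (ih (G.dist e z) (by omega) z rfl)
      intro w hw
      obtain ⟨q, r, hsp, _, _⟩ :=
        gate hconn hpc hcyc hss hentry_mem hentry_min hentry_uniq hxi hw
      have hw' : (q.append r).length = G.dist e x := by rw [← hsp]; exact hw
      have hqg : q.length = G.dist e (entry i) := (geo_split hconn hw').1
      obtain ⟨z2, B, hz2y, hBeq⟩ := exists_concat q hene
      have hBgeo : (B.concat hz2y).length = G.dist e (entry i) := by
        rw [← hBeq]; exact hqg
      have hz2z : z2 = z := pred_unique hconn hcyc hentry_min hQ hz2y hzy hBgeo hgeo0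
      subst hz2z
      have hzq : z2 ∈ q.support := by
        rw [hBeq, Walk.concat_eq_append]
        exact (Walk.mem_support_append_iff _ _).2 (Or.inl B.end_mem_support)
      rw [hsp]
      exact (Walk.mem_support_append_iff _ _).2 (Or.inl hzq)

end TGProof

/-- Lemma 4.4: decomposition of geodesics in a tree-graded graph.  For every vertex `x`
there are finitely many pieces `idx 0, …, idx k` and vertices `pts 0, …, pts k = x`
(independent of the chosen geodesic) such that every geodesic `w` from `e` to `x`
decomposes as a concatenation of geodesics `g_j ⊆ P (idx j)` from the entry point
`entry (idx j)` (the unique vertex of the piece closest to `e`) to `pts j`, joined by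
connecting segments of length at most `1`. -/
theorem stmt10 {V ι : Type*} (G : SimpleGraph V) (hconn : G.Connected)
    (P : ι → Set V) (htg : IsTreeGraded G P) (e : V)
    (entry : ι → V)
    (hentry_mem : ∀ i, entry i ∈ P i)
    (hentry_min : ∀ i, ∀ v ∈ P i, G.dist e (entry i) ≤ G.dist e v)
    (hentry_uniq : ∀ i, ∀ v ∈ P i, G.dist e v = G.dist e (entry i) → v = entry i)
    (x : V) :
    ∃ (k : ℕ) (idx : Fin (k + 1) → ι) (pts : Fin (k + 1) → V),
      Function.Injective idx ∧
      entry (idx 0) = e ∧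
      pts (Fin.last k) = x ∧
      (∀ j : Fin (k + 1), pts j ∈ P (idx j)) ∧
      (∀ w : G.Walk e x, w.length = G.dist e x →
        (∀ j : Fin (k + 1), entry (idx j) ∈ w.support ∧ pts j ∈ w.support) ∧
        (∀ j : Fin (k + 1), ∀ v ∈ w.support,
          G.dist e (entry (idx j)) ≤ G.dist e v → G.dist e v ≤ G.dist e (pts j) →
            v ∈ P (idx j))) ∧
      (∀ j : Fin k, G.dist (pts j.castSucc) (entry (idx j.succ)) ≤ 1) ∧
      G.dist e x = (∑ j : Fin (k + 1), G.dist (entry (idx j)) (pts j)) +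
        ∑ j : Fin k, G.dist (pts j.castSucc) (entry (idx j.succ)) := by
  letI := Classical.decEq V
  obtain ⟨hne, hpc, hcov, hcyc, hnsub, hss⟩ := htg
  obtain ⟨k, idx, pts, h1, h2, h3, h4, h5, h6, h7, -, -⟩ :=
    TGProof.decomp hconn hpc hcov hcyc hss hentry_mem hentry_min hentry_uniq
      (G.dist e x) x rfl
  exact ⟨k, idx, pts, h1, h2, h3, h4, h5, h6, h7⟩
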